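/- Let B* ∈ ℝ^{m×p₂} have rank r with compact singular value decomposition B* = UΣVᵀ, where U ∈ ℝ^{m×r} and V ∈ ℝ^{p₂×r} have orthonormal columns, and let T₀ = {B ∈ ℝ^{m×p₂} : (I − UUᵀ)B(I − VVᵀ) = 0}. Let E ∈ ℝ^{m×p₂} satisfy ‖B* + E‖_* ≤ ‖B*‖_*, and let E₀ denote the orthogonal projection of E onto the subspace T₀ with respect to the trace inner product. Then ‖E − E₀‖_* ≤ ‖E₀‖_* and ‖E₀‖_* ≤ √(2r)‖E₀‖_F. -/

import Mathlib

noncomputable section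
open MeasureTheory Matrix

/-- Frobenius norm of a real matrix. -/
def frobNorm {a b : ℕ} (X : Matrix (Fin a) (Fin b) ℝ) : ℝ :=
  Real.sqrt (∑ i, ∑ j, (X i j) ^ 2)

/-- Euclidean norm of a vector. -/
def l2Norm {n : ℕ} (v : Fin n → ℝ) : ℝ :=
  Real.sqrt (∑ i, (v i) ^ 2)

/-- Sum of Euclidean norms of the rows (ℓ_{1,2} norm). -/
def l12Norm {a b : ℕ} (X : Matrix (Fin a) (Fin b) ℝ) : ℝ :=
  ∑ i, Real.sqrt (∑ j, (X i j) ^ 2)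

/-- Nuclear norm: sum of the singular values of `X`. -/
def nuclearNorm {a b : ℕ} (X : Matrix (Fin a) (Fin b) ℝ) : ℝ :=
  ∑ i, Real.sqrt (((Matrix.isHermitian_conjTranspose_mul_self X : (Xᵀ * X).IsHermitian)).eigenvalues i)

/-- Spectral norm (ℓ₂ operator norm). -/
def specNorm {a b : ℕ} (X : Matrix (Fin a) (Fin b) ℝ) : ℝ :=
  sSup ((fun v => l2Norm (X.mulVec v)) '' {v | l2Norm v ≤ 1})

/-- Number of nonzero rows. -/
def rowSparsity {a b : ℕ} (X : Matrix (Fin a) (Fin b) ℝ) : ℕ :=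
  {i | X i ≠ 0}.ncard

/-- The set 𝕏_{k,r} of matrices with at most `k` nonzero rows and rank at most `r`. -/
def sparseLowRank (p₁ p₂ k r : ℕ) : Set (Matrix (Fin p₁) (Fin p₂) ℝ) :=
  {X | rowSparsity X ≤ k ∧ X.rank ≤ r}

/-- Gaussian measure on ℝⁿ with mean `μ` and covariance `σ² Iₙ`. -/
def gaussianPi (n : ℕ) (μ : Fin n → ℝ) (σ : ℝ) : Measure (Fin n → ℝ) :=
  Measure.pi fun i => ProbabilityTheory.gaussianReal (μ i) (Real.toNNReal (σ ^ 2))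

namespace NucAux
variable {a b : ℕ}

def dd (X : Matrix (Fin a) (Fin b) ℝ) : Fin b → ℝ :=
  (isHermitian_conjTranspose_mul_self X).eigenvalues

def WW (X : Matrix (Fin a) (Fin b) ℝ) : Matrix (Fin b) (Fin b) ℝ :=
  ((isHermitian_conjTranspose_mul_self X).eigenvectorUnitary : Matrix (Fin b) (Fin b) ℝ)

lemma dd_nonneg (X : Matrix (Fin a) (Fin b) ℝ) (i : Fin b) : 0 ≤ dd X i :=
  (posSemidef_conjTranspose_mul_self X).eigenvalues_nonneg i

lemma WW_mul_star (X : Matrix (Fin a) (Fin b) ℝ) : WW X * (WW X)ᴴ = 1 := by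
  have := (isHermitian_conjTranspose_mul_self X).eigenvectorUnitary.2
  rw [Matrix.mem_unitaryGroup_iff] at this
  simpa [WW, star_eq_conjTranspose] using this

lemma star_mul_WW (X : Matrix (Fin a) (Fin b) ℝ) : (WW X)ᴴ * WW X = 1 := by
  have := (isHermitian_conjTranspose_mul_self X).eigenvectorUnitary.2
  rw [Matrix.mem_unitaryGroup_iff'] at this
  simpa [WW, star_eq_conjTranspose] using this

lemma spectral (X : Matrix (Fin a) (Fin b) ℝ) :
    Xᴴ * X = WW X * diagonal (dd X) * (WW X)ᴴ := by
  have h := (isHermitian_conjTranspose_mul_self X).spectral_theorem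
  simpa [WW, dd, star_eq_conjTranspose, Function.comp] using h

def gD (X : Matrix (Fin a) (Fin b) ℝ) : Matrix (Fin b) (Fin b) ℝ :=
  diagonal (fun i => if 0 < dd X i then (Real.sqrt (dd X i))⁻¹ else 0)

def chiD (X : Matrix (Fin a) (Fin b) ℝ) : Matrix (Fin b) (Fin b) ℝ :=
  diagonal (fun i => if 0 < dd X i then (1 : ℝ) else 0)

def dualY (X : Matrix (Fin a) (Fin b) ℝ) : Matrix (Fin a) (Fin b) ℝ :=
  X * (WW X * gD X * (WW X)ᴴ)

lemma dd_eq_zero {X : Matrix (Fin a) (Fin b) ℝ} {i : Fin b} (h : ¬ 0 < dd X i) : dd X i = 0 :=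
  le_antisymm (not_lt.mp h) (dd_nonneg X i)

lemma gD_mul_diag_mul_gD (X : Matrix (Fin a) (Fin b) ℝ) :
    gD X * diagonal (dd X) * gD X = chiD X := by
  rw [gD, chiD, diagonal_mul_diagonal, diagonal_mul_diagonal]
  refine congrArg Matrix.diagonal (funext fun i => ?_)
  by_cases h : 0 < dd X i
  · have hs : Real.sqrt (dd X i) ≠ 0 := ne_of_gt (Real.sqrt_pos.mpr h)
    rw [if_pos h, if_pos h]
    field_simp
    rw [Real.sq_sqrt (dd_nonneg X i)]

  · simp [h]

lemma diag_mul_gD (X : Matrix (Fin a) (Fin b) ℝ) :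
    diagonal (dd X) * gD X = diagonal (fun i => Real.sqrt (dd X i)) := by
  rw [gD, diagonal_mul_diagonal]
  refine congrArg Matrix.diagonal (funext fun i => ?_)
  by_cases h : 0 < dd X i
  · have hs : Real.sqrt (dd X i) ≠ 0 := ne_of_gt (Real.sqrt_pos.mpr h)
    rw [if_pos h]
    field_simp
    rw [Real.sq_sqrt (dd_nonneg X i)]

  · simp [h, dd_eq_zero h]

lemma gD_mul_sqrtdiag (X : Matrix (Fin a) (Fin b) ℝ) :
    gD X * diagonal (fun i => Real.sqrt (dd X i)) = chiD X := by
  rw [gD, chiD, diagonal_mul_diagonal]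
  refine congrArg Matrix.diagonal (funext fun i => ?_)
  by_cases h : 0 < dd X i
  · have hs : Real.sqrt (dd X i) ≠ 0 := ne_of_gt (Real.sqrt_pos.mpr h)
    rw [if_pos h, if_pos h, inv_mul_cancel₀ hs]
  · simp [h, dd_eq_zero h]

lemma gD_herm (X : Matrix (Fin a) (Fin b) ℝ) :
    (WW X * gD X * (WW X)ᴴ)ᴴ = WW X * gD X * (WW X)ᴴ := by
  rw [conjTranspose_mul, conjTranspose_mul, conjTranspose_conjTranspose, gD,
    diagonal_conjTranspose]
  simp [Matrix.mul_assoc, star_trivial]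

lemma gram_dualY (X : Matrix (Fin a) (Fin b) ℝ) :
    (dualY X)ᴴ * dualY X = WW X * chiD X * (WW X)ᴴ := by
  rw [dualY, conjTranspose_mul, gD_herm]
  calc (WW X * gD X * (WW X)ᴴ) * Xᴴ * (X * (WW X * gD X * (WW X)ᴴ))
      = WW X * (gD X * ((WW X)ᴴ * (Xᴴ * X) * WW X) * gD X) * (WW X)ᴴ := by
        simp only [Matrix.mul_assoc]
    _ = _ := by
        rw [spectral X]
        have : (WW X)ᴴ * (WW X * diagonal (dd X) * (WW X)ᴴ) * WW X = diagonal (dd X) := by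
          calc (WW X)ᴴ * (WW X * diagonal (dd X) * (WW X)ᴴ) * WW X
              = ((WW X)ᴴ * WW X) * diagonal (dd X) * ((WW X)ᴴ * WW X) := by
                simp only [Matrix.mul_assoc]
            _ = diagonal (dd X) := by rw [star_mul_WW]; simp
        rw [this, gD_mul_diag_mul_gD]

end NucAux

namespace NucAux
variable {a b : ℕ}


lemma cs_sqrt {n : ℕ} (f g : Fin n → ℝ) :
    ∑ i, f i * g i ≤ Real.sqrt (∑ i, f i ^ 2) * Real.sqrt (∑ i, g i ^ 2) := by
  have h := Finset.sum_mul_sq_le_sq_mul_sq Finset.univ f g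
  calc ∑ i, f i * g i ≤ |∑ i, f i * g i| := le_abs_self _
    _ = Real.sqrt ((∑ i, f i * g i) ^ 2) := (Real.sqrt_sq_eq_abs _).symm
    _ ≤ Real.sqrt ((∑ i, f i ^ 2) * ∑ i, g i ^ 2) := Real.sqrt_le_sqrt h
    _ = _ := Real.sqrt_mul (Finset.sum_nonneg fun i _ => sq_nonneg _) _

lemma psd_diag {n : ℕ} {M : Matrix (Fin n) (Fin n) ℝ} (hM : M.PosSemidef) (i : Fin n) :
    0 ≤ M i i := by
  exact hM.diag_nonneg

lemma gram_diag {c n : ℕ} (M N : Matrix (Fin c) (Fin n) ℝ) (i : Fin n) :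
    (Mᴴ * N) i i = ∑ k, M k i * N k i := by
  simp [mul_apply, conjTranspose_apply]

lemma col_sq_sum (X : Matrix (Fin a) (Fin b) ℝ) (j : Fin b) :
    ∑ i, (X * WW X) i j ^ 2 = dd X j := by
  have h : (X * WW X)ᴴ * (X * WW X) = diagonal (dd X) := by
    calc (X * WW X)ᴴ * (X * WW X) = (WW X)ᴴ * (Xᴴ * X) * WW X := by
          rw [conjTranspose_mul]; simp only [Matrix.mul_assoc]
      _ = ((WW X)ᴴ * WW X) * diagonal (dd X) * ((WW X)ᴴ * WW X) := by
          rw [spectral X]; simp only [Matrix.mul_assoc]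
      _ = diagonal (dd X) := by rw [star_mul_WW]; simp
  have := congrArg (fun M => M j j) h
  simp only [gram_diag, diagonal_apply_eq] at this
  rw [← this]
  refine Finset.sum_congr rfl fun i _ => (sq ((X * WW X) i j)).symm ▸ rfl

lemma XW_chi (X : Matrix (Fin a) (Fin b) ℝ) : X * WW X * chiD X = X * WW X := by
  ext i j
  rw [chiD, Matrix.mul_diagonal]
  by_cases h : 0 < dd X j
  · simp [h]
  · have hz : ∑ i, (X * WW X) i j ^ 2 = 0 := by rw [col_sq_sum, dd_eq_zero h]
    have : (X * WW X) i j = 0 := by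
      have := (Finset.sum_eq_zero_iff_of_nonneg (fun i _ => sq_nonneg ((X * WW X) i j))).mp hz i (Finset.mem_univ i)
      exact pow_eq_zero_iff (two_ne_zero) |>.mp this
    simp [h, this]

lemma X_decomp (X : Matrix (Fin a) (Fin b) ℝ) :
    X = (X * WW X * gD X) * diagonal (fun i => Real.sqrt (dd X i)) * (WW X)ᴴ := by
  have h1 : (X * WW X * gD X) * diagonal (fun i => Real.sqrt (dd X i)) = X * WW X := by
    calc (X * WW X * gD X) * diagonal (fun i => Real.sqrt (dd X i))
        = X * WW X * (gD X * diagonal (fun i => Real.sqrt (dd X i))) := by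
          simp only [Matrix.mul_assoc]
      _ = X * WW X * chiD X := by rw [gD_mul_sqrtdiag]
      _ = X * WW X := XW_chi X
  rw [h1, Matrix.mul_assoc, WW_mul_star, Matrix.mul_one]

lemma AgramA (X : Matrix (Fin a) (Fin b) ℝ) :
    (X * WW X * gD X)ᴴ * (X * WW X * gD X) = chiD X := by
  have hg : (gD X)ᴴ = gD X := by rw [gD, diagonal_conjTranspose]; simp [star_trivial]
  calc (X * WW X * gD X)ᴴ * (X * WW X * gD X)
      = (gD X)ᴴ * ((X * WW X)ᴴ * (X * WW X)) * gD X := by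
        simp only [conjTranspose_mul, Matrix.mul_assoc]
    _ = gD X * diagonal (dd X) * gD X := by
        rw [hg]
        have h : (X * WW X)ᴴ * (X * WW X) = diagonal (dd X) := by
          calc (X * WW X)ᴴ * (X * WW X) = (WW X)ᴴ * (Xᴴ * X) * WW X := by
                rw [conjTranspose_mul]; simp only [Matrix.mul_assoc]
            _ = ((WW X)ᴴ * WW X) * diagonal (dd X) * ((WW X)ᴴ * WW X) := by
                rw [spectral X]; simp only [Matrix.mul_assoc]
            _ = diagonal (dd X) := by rw [star_mul_WW]; simp
        rw [h, Matrix.mul_assoc]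
    _ = chiD X := gD_mul_diag_mul_gD X

/-- Master trace inequality. -/
lemma trace_le {n : ℕ} (Y : Matrix (Fin a) (Fin b) ℝ) (hY : (1 - Yᴴ * Y).PosSemidef)
    (A : Matrix (Fin a) (Fin n) ℝ) (B : Matrix (Fin b) (Fin n) ℝ) (t : Fin n → ℝ)
    (ht : ∀ i, 0 ≤ t i) (hA : ∀ i, ∑ k, (A k i) ^ 2 ≤ 1) (hB : ∀ i, ∑ k, (B k i) ^ 2 ≤ 1) :
    trace (Yᴴ * (A * diagonal t * Bᴴ)) ≤ ∑ i, t i := by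
  have h1 : trace (Yᴴ * (A * diagonal t * Bᴴ)) = trace (((Y * B)ᴴ * A) * diagonal t) := by
    rw [conjTranspose_mul]
    rw [show Yᴴ * (A * diagonal t * Bᴴ) = (Yᴴ * A * diagonal t) * Bᴴ by
      simp only [Matrix.mul_assoc]]
    rw [trace_mul_comm]
    simp only [Matrix.mul_assoc]
  rw [h1]
  have h2 : trace (((Y * B)ᴴ * A) * diagonal t) = ∑ i, ((Y * B)ᴴ * A) i i * t i := by
    simp [trace, Matrix.mul_diagonal, diag]
  rw [h2]
  refine Finset.sum_le_sum fun i _ => ?_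
  refine le_trans (mul_le_of_le_one_left (ht i) ?_) (le_refl (t i))
  -- ((Y*B)ᴴ*A) i i ≤ 1
  have hYB : ∑ k, ((Y * B) k i) ^ 2 ≤ 1 := by
    have hpsd := hY.conjTranspose_mul_mul_same B
    have hp := psd_diag hpsd i
    have hexp : Bᴴ * (1 - Yᴴ * Y) * B = Bᴴ * B - (Y * B)ᴴ * (Y * B) := by
      rw [Matrix.mul_sub, Matrix.mul_one, Matrix.sub_mul, conjTranspose_mul]
      simp only [Matrix.mul_assoc]
    rw [hexp, Matrix.sub_apply] at hp
    have h3 : ((Y * B)ᴴ * (Y * B)) i i ≤ (Bᴴ * B) i i := by linarith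
    rw [gram_diag, gram_diag] at h3
    have h4 : ∑ k, B k i * B k i ≤ 1 := by
      have := hB i; simpa [sq] using this
    calc ∑ k, ((Y * B) k i) ^ 2 = ∑ k, (Y * B) k i * (Y * B) k i := by
          refine Finset.sum_congr rfl fun k _ => sq ((Y * B) k i)
      _ ≤ ∑ k, B k i * B k i := h3
      _ ≤ 1 := h4
  rw [gram_diag]
  calc ∑ k, (Y * B) k i * A k i
      ≤ Real.sqrt (∑ k, ((Y * B) k i) ^ 2) * Real.sqrt (∑ k, (A k i) ^ 2) := cs_sqrt _ _
    _ ≤ 1 * 1 := by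
        refine mul_le_mul ?_ ?_ (Real.sqrt_nonneg _) zero_le_one
        · simpa using Real.sqrt_le_sqrt hYB
        · simpa using Real.sqrt_le_sqrt (hA i)
    _ = 1 := one_mul 1

end NucAux

namespace NucAux
variable {a b : ℕ}

def nuc (X : Matrix (Fin a) (Fin b) ℝ) : ℝ := ∑ i, Real.sqrt (dd X i)

lemma chiD_diag_le (X : Matrix (Fin a) (Fin b) ℝ) (i : Fin b) : chiD X i i ≤ 1 := by
  rw [chiD, diagonal_apply_eq]; split <;> norm_num

/-- Duality upper bound: `⟨Y, X⟩ ≤ ‖X‖_*` when `YᵀY ≼ 1`. -/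
lemma nuclear_ub (X Y : Matrix (Fin a) (Fin b) ℝ) (hY : (1 - Yᴴ * Y).PosSemidef) :
    trace (Yᴴ * X) ≤ nuc X := by
  conv_lhs => rw [X_decomp X]
  refine trace_le Y hY _ _ _ (fun i => Real.sqrt_nonneg _) (fun i => ?_) (fun i => ?_)
  · have h := AgramA X
    have := congrArg (fun M => M i i) h
    simp only [gram_diag] at this
    calc ∑ k, ((X * WW X * gD X) k i) ^ 2
        = ∑ k, (X * WW X * gD X) k i * (X * WW X * gD X) k i := by
          refine Finset.sum_congr rfl fun k _ => sq _
      _ = chiD X i i := this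
      _ ≤ 1 := chiD_diag_le X i
  · have h := star_mul_WW X
    have := congrArg (fun M => M i i) h
    simp only [gram_diag, Matrix.one_apply_eq] at this
    refine le_of_eq ?_
    calc ∑ k, (WW X k i) ^ 2 = ∑ k, WW X k i * WW X k i := by
          refine Finset.sum_congr rfl fun k _ => sq _
      _ = 1 := this

/-- The dual element attains the nuclear norm. -/
lemma dual_trace (X : Matrix (Fin a) (Fin b) ℝ) :
    trace ((dualY X)ᴴ * X) = nuc X := by
  have h : (dualY X)ᴴ * X = WW X * (gD X * diagonal (dd X)) * (WW X)ᴴ := by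
    calc (dualY X)ᴴ * X = (WW X * gD X * (WW X)ᴴ) * (Xᴴ * X) := by
          rw [dualY, conjTranspose_mul, gD_herm, Matrix.mul_assoc]
      _ = WW X * gD X * ((WW X)ᴴ * WW X) * diagonal (dd X) * (WW X)ᴴ := by
          rw [spectral X]; simp only [Matrix.mul_assoc]
      _ = _ := by rw [star_mul_WW]; simp only [Matrix.mul_one, Matrix.mul_assoc]
  rw [h, trace_mul_cycle, ← Matrix.mul_assoc, star_mul_WW, Matrix.one_mul]
  have hgd : gD X * diagonal (dd X) = diagonal (fun i => Real.sqrt (dd X i)) := by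
    rw [gD, diagonal_mul_diagonal]
    refine congrArg Matrix.diagonal (funext fun i => ?_)
    by_cases hi : 0 < dd X i
    · have hs : Real.sqrt (dd X i) ≠ 0 := ne_of_gt (Real.sqrt_pos.mpr hi)
      rw [if_pos hi]
      field_simp
      rw [Real.sq_sqrt (dd_nonneg X i)]
    · simp [hi, dd_eq_zero hi]
  rw [hgd, trace_diagonal, nuc]

/-- The dual element is a spectral-norm contraction. -/
lemma dual_psd (X : Matrix (Fin a) (Fin b) ℝ) :
    (1 - (dualY X)ᴴ * dualY X).PosSemidef := by
  rw [gram_dualY]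
  have h1 : (1 : Matrix (Fin b) (Fin b) ℝ) = WW X * 1 * (WW X)ᴴ := by
    rw [Matrix.mul_one, WW_mul_star]
  have h2 : 1 - WW X * chiD X * (WW X)ᴴ
      = WW X * diagonal (fun i => 1 - (if 0 < dd X i then (1:ℝ) else 0)) * (WW X)ᴴ := by
    conv_lhs => rw [h1]
    rw [chiD, ← Matrix.sub_mul, ← Matrix.mul_sub]
    congr 2
    rw [← diagonal_one, diagonal_sub]
  rw [h2]
  refine (Matrix.PosSemidef.diagonal fun i => ?_).mul_mul_conjTranspose_same (WW X)
  split <;> norm_num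

/-- If `X * C = 0` then the dual gram matrix kills `C`. -/
lemma gram_kill {c : ℕ} (X : Matrix (Fin a) (Fin b) ℝ) (C : Matrix (Fin b) (Fin c) ℝ)
    (hXC : X * C = 0) : WW X * chiD X * (WW X)ᴴ * C = 0 := by
  have h1 : WW X * diagonal (dd X) * ((WW X)ᴴ * C) = 0 := by
    have : Xᴴ * X * C = 0 := by rw [Matrix.mul_assoc, hXC, Matrix.mul_zero]
    rw [spectral X] at this
    calc WW X * diagonal (dd X) * ((WW X)ᴴ * C)
        = WW X * diagonal (dd X) * (WW X)ᴴ * C := by simp only [Matrix.mul_assoc]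
      _ = 0 := this
  have h2 : diagonal (dd X) * ((WW X)ᴴ * C) = 0 := by
    have h := congrArg (fun M => (WW X)ᴴ * M) h1
    simp only [Matrix.mul_zero] at h
    rw [show (WW X)ᴴ * (WW X * diagonal (dd X) * ((WW X)ᴴ * C))
        = ((WW X)ᴴ * WW X) * (diagonal (dd X) * ((WW X)ᴴ * C)) from by
      simp only [Matrix.mul_assoc], star_mul_WW, Matrix.one_mul] at h
    exact h
  have h3 : chiD X * ((WW X)ᴴ * C) = 0 := by
    ext i j
    have hd := congrArg (fun M => M i j) h2
    simp only [diagonal_mul, Matrix.zero_apply] at hd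
    show (chiD X * ((WW X)ᴴ * C)) i j = 0
    rw [chiD, diagonal_mul]
    by_cases hi : 0 < dd X i
    · have hz : ((WW X)ᴴ * C) i j = 0 := by
        rcases mul_eq_zero.mp hd with h | h
        · exact absurd h (ne_of_gt hi)
        · exact h
      rw [if_pos hi, one_mul, hz]
    · rw [if_neg hi, zero_mul]
  calc WW X * chiD X * (WW X)ᴴ * C = WW X * (chiD X * ((WW X)ᴴ * C)) := by
        simp only [Matrix.mul_assoc]
    _ = 0 := by rw [h3, Matrix.mul_zero]

end NucAux

namespace NucAux
variable {a b : ℕ}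

lemma ct_eq {c d : ℕ} (M : Matrix (Fin c) (Fin d) ℝ) : Mᴴ = Mᵀ :=
  conjTranspose_eq_transpose_of_trivial M

lemma trace_eq_sum (A B : Matrix (Fin a) (Fin b) ℝ) :
    trace (Aᴴ * B) = ∑ i, ∑ j, A i j * B i j := by
  simp only [trace, diag_apply, mul_apply, conjTranspose_apply, star_trivial]
  rw [Finset.sum_comm]

lemma chi_idem (X : Matrix (Fin a) (Fin b) ℝ) : chiD X * chiD X = chiD X := by
  rw [chiD, diagonal_mul_diagonal]
  refine congrArg Matrix.diagonal (funext fun i => ?_)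
  split <;> norm_num

lemma chi_herm (X : Matrix (Fin a) (Fin b) ℝ) : (chiD X)ᴴ = chiD X := by
  rw [chiD, diagonal_conjTranspose]
  simp [star_trivial]

lemma matrank_add_le {c d : ℕ} (A B : Matrix (Fin c) (Fin d) ℝ) :
    (A + B).rank ≤ A.rank + B.rank := by
  rw [Matrix.rank, Matrix.rank, Matrix.rank]
  have hle : LinearMap.range (A + B).mulVecLin
      ≤ LinearMap.range A.mulVecLin ⊔ LinearMap.range B.mulVecLin := by
    rintro x ⟨v, rfl⟩
    rw [Matrix.mulVecLin_add, LinearMap.add_apply]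
    exact Submodule.add_mem_sup (LinearMap.mem_range_self _ v) (LinearMap.mem_range_self _ v)
  exact le_trans (Submodule.finrank_mono hle)
    (Submodule.finrank_add_le_finrank_add_finrank _ _)

lemma trace_gram (X : Matrix (Fin a) (Fin b) ℝ) :
    trace (Xᴴ * X) = ∑ i, dd X i := by
  rw [spectral X, trace_mul_cycle, star_mul_WW, Matrix.one_mul, trace_diagonal]

lemma frob_sq (X : Matrix (Fin a) (Fin b) ℝ) :
    ∑ i, ∑ j, (X i j) ^ 2 = ∑ i, dd X i := by
  rw [← trace_gram X, trace_eq_sum]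
  refine Finset.sum_congr rfl fun i _ => Finset.sum_congr rfl fun j _ => (sq _)

lemma rank_diag_eq (X : Matrix (Fin a) (Fin b) ℝ) :
    (diagonal (dd X)).rank = (Xᴴ * X).rank := by
  refine le_antisymm ?_ ?_
  · have h2 : (WW X)ᴴ * (WW X * diagonal (dd X) * (WW X)ᴴ) * WW X = diagonal (dd X) := by
      calc (WW X)ᴴ * (WW X * diagonal (dd X) * (WW X)ᴴ) * WW X
          = ((WW X)ᴴ * WW X) * diagonal (dd X) * ((WW X)ᴴ * WW X) := by
            simp only [Matrix.mul_assoc]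
        _ = diagonal (dd X) := by rw [star_mul_WW]; simp
    have h : diagonal (dd X) = (WW X)ᴴ * (Xᴴ * X) * WW X := by
      rw [spectral X]; exact h2.symm
    rw [h]
    exact le_trans (Matrix.rank_mul_le_left _ _) (Matrix.rank_mul_le_right _ _)
  · rw [spectral X]
    exact le_trans (Matrix.rank_mul_le_left _ _) (Matrix.rank_mul_le_right _ _)

end NucAux

namespace NucAux

lemma proj_compl {n : ℕ} {A : Matrix (Fin n) (Fin n) ℝ} (hA : A * A = A) :
    (1 - A) * (1 - A) = 1 - A := by
  rw [Matrix.sub_mul, Matrix.mul_sub, Matrix.mul_sub, Matrix.one_mul, Matrix.one_mul,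
    Matrix.mul_one, hA]
  abel

lemma dualY_eq {a b : ℕ} (X : Matrix (Fin a) (Fin b) ℝ) :
    dualY X = X * (WW X * gD X * (WW X)ᴴ) := rfl

end NucAux

/-- cone condition for the error of a nuclear-norm minimizer. -/
theorem error_cone_condition
    (m p₂ r : ℕ) (Bstar : Matrix (Fin m) (Fin p₂) ℝ)
    (U : Matrix (Fin m) (Fin r) ℝ) (V : Matrix (Fin p₂) (Fin r) ℝ) (s : Fin r → ℝ)
    (hrank : Bstar.rank = r)
    (hU : Uᵀ * U = 1) (hV : Vᵀ * V = 1) (hs : ∀ i, 0 < s i)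
    (hSVD : Bstar = U * Matrix.diagonal s * Vᵀ)
    (E E₀ : Matrix (Fin m) (Fin p₂) ℝ)
    -- `E₀` belongs to the subspace `T₀`
    (hE₀mem : (1 - U * Uᵀ) * E₀ * (1 - V * Vᵀ) = 0)
    -- `E - E₀` is orthogonal to `T₀` w.r.t. the trace inner product
    (hproj : ∀ B : Matrix (Fin m) (Fin p₂) ℝ, (1 - U * Uᵀ) * B * (1 - V * Vᵀ) = 0 →
      ∑ i, ∑ j, (E - E₀) i j * B i j = 0)
    (hopt : nuclearNorm (Bstar + E) ≤ nuclearNorm Bstar) :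
    nuclearNorm (E - E₀) ≤ nuclearNorm E₀ ∧
    nuclearNorm E₀ ≤ Real.sqrt (2 * r) * frobNorm E₀ := by
  classical
  open NucAux in
  have hU' : Uᴴ * U = 1 := by rw [ct_eq]; exact hU
  have hV' : Vᴴ * V = 1 := by rw [ct_eq]; exact hV
  simp only [← NucAux.ct_eq] at hE₀mem hproj hSVD
  set E₁ : Matrix (Fin m) (Fin p₂) ℝ := E - E₀ with hE₁def
  set P : Matrix (Fin m) (Fin m) ℝ := 1 - U * Uᴴ with hPdef
  set Q : Matrix (Fin p₂) (Fin p₂) ℝ := 1 - V * Vᴴ with hQdef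
  have hUU : (U * Uᴴ) * (U * Uᴴ) = U * Uᴴ := by
    calc (U * Uᴴ) * (U * Uᴴ) = U * (Uᴴ * U) * Uᴴ := by simp only [Matrix.mul_assoc]
      _ = U * Uᴴ := by rw [hU', Matrix.mul_one]
  have hVV : (V * Vᴴ) * (V * Vᴴ) = V * Vᴴ := by
    calc (V * Vᴴ) * (V * Vᴴ) = V * (Vᴴ * V) * Vᴴ := by simp only [Matrix.mul_assoc]
      _ = V * Vᴴ := by rw [hV', Matrix.mul_one]
  have hPP : P * P = P := NucAux.proj_compl hUU
  have hQQ : Q * Q = Q := NucAux.proj_compl hVV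
  have hQV : Q * V = 0 := by
    rw [hQdef, Matrix.sub_mul, Matrix.one_mul, Matrix.mul_assoc, hV', Matrix.mul_one, sub_self]
  have hUP : Uᴴ * P = 0 := by
    rw [hPdef, Matrix.mul_sub, Matrix.mul_one, ← Matrix.mul_assoc, hU', Matrix.one_mul, sub_self]
  have hPsym : Pᴴ = P := by
    rw [hPdef]
    simp [conjTranspose_sub, conjTranspose_mul, conjTranspose_one, conjTranspose_conjTranspose]
  have hQsym : Qᴴ = Q := by
    rw [hQdef]
    simp [conjTranspose_sub, conjTranspose_mul, conjTranspose_one, conjTranspose_conjTranspose]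
  -- Step A: E₁ lies in the orthogonal complement of T₀
  have hE₁T : E₁ = P * E₁ * Q := by
    set C : Matrix (Fin m) (Fin p₂) ℝ := E₁ - P * E₁ * Q with hCdef
    have hPEQ : P * (P * E₁ * Q) * Q = P * E₁ * Q := by
      calc P * (P * E₁ * Q) * Q = (P * P) * E₁ * (Q * Q) := by simp only [Matrix.mul_assoc]
        _ = P * E₁ * Q := by rw [hPP, hQQ]
    have hC0 : P * C * Q = 0 := by
      have expand : P * (E₁ - P * E₁ * Q) * Q = P * E₁ * Q - P * (P * E₁ * Q) * Q := by
        rw [Matrix.mul_sub P E₁ (P * E₁ * Q), Matrix.sub_mul (P * E₁) (P * (P * E₁ * Q)) Q]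
      rw [hCdef, expand, hPEQ, sub_self]
    have h1 : ∑ i, ∑ j, E₁ i j * C i j = 0 := hproj C hC0
    have h2 : ∑ i, ∑ j, (P * E₁ * Q) i j * C i j = 0 := by
      rw [← NucAux.trace_eq_sum]
      have hctP : (P * E₁ * Q)ᴴ = Q * (E₁ᴴ * P) := by
        rw [conjTranspose_mul, conjTranspose_mul, hPsym, hQsym]
      rw [hctP]
      calc trace (Q * (E₁ᴴ * P) * C) = trace (E₁ᴴ * P * C * Q) := by
            rw [Matrix.mul_assoc, trace_mul_comm]
        _ = trace (E₁ᴴ * (P * C * Q)) := by simp only [Matrix.mul_assoc]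
        _ = 0 := by rw [hC0, Matrix.mul_zero, trace_zero]
    have h4 : ∑ i, ∑ j, C i j ^ 2 = 0 := by
      have : ∀ i j, C i j ^ 2 = E₁ i j * C i j - (P * E₁ * Q) i j * C i j := by
        intro i j
        have : C i j = E₁ i j - (P * E₁ * Q) i j := by rw [hCdef, Matrix.sub_apply]
        rw [this]; ring
      calc ∑ i, ∑ j, C i j ^ 2
          = ∑ i, ∑ j, (E₁ i j * C i j - (P * E₁ * Q) i j * C i j) := by
            exact Finset.sum_congr rfl fun i _ => Finset.sum_congr rfl fun j _ => this i j
        _ = 0 := by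
            simp only [Finset.sum_sub_distrib]
            rw [h1, h2, sub_zero]
    have hC : C = 0 := by
      ext i j
      have hz := (Finset.sum_eq_zero_iff_of_nonneg
        (fun i _ => Finset.sum_nonneg fun j _ => sq_nonneg (C i j))).mp h4 i (Finset.mem_univ i)
      have := (Finset.sum_eq_zero_iff_of_nonneg
        (fun j _ => sq_nonneg (C i j))).mp hz j (Finset.mem_univ j)
      simpa using pow_eq_zero_iff two_ne_zero |>.mp this
    have := sub_eq_zero.mp (hCdef ▸ hC)
    exact this
  -- Step B
  have hUE₁ : Uᴴ * E₁ = 0 := by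
    calc Uᴴ * E₁ = Uᴴ * (P * E₁ * Q) := by rw [← hE₁T]
      _ = (Uᴴ * P) * (E₁ * Q) := by simp only [Matrix.mul_assoc]
      _ = 0 := by rw [hUP, Matrix.zero_mul]
  have hE₁V : E₁ * V = 0 := by
    have h := congrArg (· * V) hE₁T
    simp only [Matrix.mul_assoc] at h
    rw [h, hQV, Matrix.mul_zero, Matrix.mul_zero]
  -- Step C: dual certificate
  set Z : Matrix (Fin m) (Fin p₂) ℝ := NucAux.dualY E₁ with hZdef
  set Y : Matrix (Fin m) (Fin p₂) ℝ := U * Vᴴ + Z with hYdef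
  have hUZ : Uᴴ * Z = 0 := by
    rw [hZdef, NucAux.dualY_eq, ← Matrix.mul_assoc, hUE₁, Matrix.zero_mul]
  have hZU : Zᴴ * U = 0 := by
    have := congrArg conjTranspose hUZ
    simpa [conjTranspose_mul] using this
  set Pm : Matrix (Fin p₂) (Fin p₂) ℝ :=
    NucAux.WW E₁ * NucAux.chiD E₁ * (NucAux.WW E₁)ᴴ with hPmdef
  have hPmV : Pm * V = 0 := NucAux.gram_kill E₁ V hE₁V
  have hgramY : Yᴴ * Y = V * Vᴴ + Pm := by
    rw [hYdef, conjTranspose_add, conjTranspose_mul, conjTranspose_conjTranspose,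
      Matrix.add_mul, Matrix.mul_add, Matrix.mul_add]
    have e1 : V * Uᴴ * (U * Vᴴ) = V * Vᴴ := by
      calc V * Uᴴ * (U * Vᴴ) = V * (Uᴴ * U) * Vᴴ := by simp only [Matrix.mul_assoc]
        _ = V * Vᴴ := by rw [hU', Matrix.mul_one]
    have e2 : V * Uᴴ * Z = 0 := by rw [Matrix.mul_assoc, hUZ, Matrix.mul_zero]
    have e3 : Zᴴ * (U * Vᴴ) = 0 := by rw [← Matrix.mul_assoc, hZU, Matrix.zero_mul]
    rw [e1, e2, e3, hZdef, NucAux.gram_dualY, ← hPmdef]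
    abel
  have hPmsym : Pmᴴ = Pm := by
    rw [hPmdef]
    simp only [conjTranspose_mul, conjTranspose_conjTranspose, NucAux.chi_herm]
    simp only [Matrix.mul_assoc]
  have hPm2 : Pm * Pm = Pm := by
    rw [hPmdef]
    calc NucAux.WW E₁ * NucAux.chiD E₁ * (NucAux.WW E₁)ᴴ *
          (NucAux.WW E₁ * NucAux.chiD E₁ * (NucAux.WW E₁)ᴴ)
        = NucAux.WW E₁ * (NucAux.chiD E₁ * (((NucAux.WW E₁)ᴴ * NucAux.WW E₁) * NucAux.chiD E₁))
            * (NucAux.WW E₁)ᴴ := by simp only [Matrix.mul_assoc]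
      _ = NucAux.WW E₁ * (NucAux.chiD E₁ * NucAux.chiD E₁) * (NucAux.WW E₁)ᴴ := by
          rw [NucAux.star_mul_WW, Matrix.one_mul, Matrix.mul_assoc]
      _ = _ := by rw [NucAux.chi_idem]
  have hPmQ : Pm * (V * Vᴴ) = 0 := by rw [← Matrix.mul_assoc, hPmV, Matrix.zero_mul]
  have hQPm : (V * Vᴴ) * Pm = 0 := by
    have h := congrArg conjTranspose hPmQ
    rw [conjTranspose_mul, conjTranspose_mul, conjTranspose_conjTranspose, hPmsym,
      conjTranspose_zero] at h
    exact h
  set S : Matrix (Fin p₂) (Fin p₂) ℝ := V * Vᴴ + Pm with hSdef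
  have hS2 : S * S = S := by
    rw [hSdef, Matrix.add_mul, Matrix.mul_add, Matrix.mul_add, hVV, hPm2, hPmQ, hQPm]
    abel
  have hSsym : Sᴴ = S := by
    rw [hSdef, conjTranspose_add, hPmsym, conjTranspose_mul, conjTranspose_conjTranspose]
  have hYpsd : (1 - Yᴴ * Y).PosSemidef := by
    have hR : 1 - Yᴴ * Y = 1 - S := by rw [hgramY, hSdef]
    rw [hR]
    have h1 : (1 - S) = (1 - S)ᴴ * (1 - S) := by
      rw [conjTranspose_sub, conjTranspose_one, hSsym, NucAux.proj_compl hS2]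
    rw [h1]
    exact posSemidef_conjTranspose_mul_self (1 - S)
  -- main chain
  have hBstar' : Bstar = U * Matrix.diagonal s * Vᴴ := hSVD
  have t1 : trace (Yᴴ * Bstar) = ∑ i, s i := by
    rw [hYdef, conjTranspose_add, conjTranspose_mul, conjTranspose_conjTranspose,
      Matrix.add_mul, trace_add]
    have tZ : Zᴴ * Bstar = 0 := by
      rw [hBstar', show U * Matrix.diagonal s * Vᴴ = U * (Matrix.diagonal s * Vᴴ) from by
        simp only [Matrix.mul_assoc], ← Matrix.mul_assoc, hZU, Matrix.zero_mul]
    have tU : trace (V * Uᴴ * Bstar) = ∑ i, s i := by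
      rw [hBstar']
      have : V * Uᴴ * (U * Matrix.diagonal s * Vᴴ) = V * Matrix.diagonal s * Vᴴ := by
        calc V * Uᴴ * (U * Matrix.diagonal s * Vᴴ)
            = V * (Uᴴ * U) * (Matrix.diagonal s * Vᴴ) := by simp only [Matrix.mul_assoc]
          _ = V * Matrix.diagonal s * Vᴴ := by
              rw [hU', Matrix.mul_one, Matrix.mul_assoc]
      rw [this, trace_mul_cycle, hV', Matrix.one_mul, trace_diagonal]
    rw [tU, tZ, trace_zero, add_zero]
  have t2 : trace (Yᴴ * E₁) = NucAux.nuc E₁ := by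
    rw [hYdef, conjTranspose_add, conjTranspose_mul, conjTranspose_conjTranspose,
      Matrix.add_mul, trace_add]
    have e0 : V * Uᴴ * E₁ = 0 := by rw [Matrix.mul_assoc, hUE₁, Matrix.mul_zero]
    rw [e0, trace_zero, zero_add, hZdef, NucAux.dual_trace]
  have t3 : -(NucAux.nuc E₀) ≤ trace (Yᴴ * E₀) := by
    have hneg : (1 - (-Y)ᴴ * (-Y)).PosSemidef := by
      rw [conjTranspose_neg, Matrix.neg_mul, Matrix.mul_neg, neg_neg]
      exact hYpsd
    have h := NucAux.nuclear_ub E₀ (-Y) hneg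
    rw [conjTranspose_neg, Matrix.neg_mul, trace_neg] at h
    linarith
  have t4 : NucAux.nuc Bstar ≤ ∑ i, s i := by
    have hAU : ∀ i, ∑ k, (U k i) ^ 2 ≤ 1 := by
      intro i
      have := congrArg (fun M => M i i) hU'
      simp only [NucAux.gram_diag, Matrix.one_apply_eq] at this
      refine le_of_eq ?_
      calc ∑ k, (U k i) ^ 2 = ∑ k, U k i * U k i :=
            Finset.sum_congr rfl fun k _ => sq (U k i)
        _ = 1 := this
    have hBV : ∀ i, ∑ k, (V k i) ^ 2 ≤ 1 := by
      intro i
      have := congrArg (fun M => M i i) hV'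
      simp only [NucAux.gram_diag, Matrix.one_apply_eq] at this
      refine le_of_eq ?_
      calc ∑ k, (V k i) ^ 2 = ∑ k, V k i * V k i :=
            Finset.sum_congr rfl fun k _ => sq (V k i)
        _ = 1 := this
    have happ := NucAux.trace_le (NucAux.dualY Bstar) (NucAux.dual_psd Bstar) U V s
      (fun i => (hs i).le) hAU hBV
    rw [← hBstar', NucAux.dual_trace Bstar] at happ
    exact happ
  have hmain := NucAux.nuclear_ub (Bstar + E) Y hYpsd
  have hEsplit : Bstar + E = Bstar + E₁ + E₀ := by rw [hE₁def]; abel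
  have hsum : trace (Yᴴ * (Bstar + E)) = (∑ i, s i) + NucAux.nuc E₁ + trace (Yᴴ * E₀) := by
    rw [hEsplit, Matrix.mul_add, Matrix.mul_add, trace_add, trace_add, t1, t2]
  have hopt' : NucAux.nuc (Bstar + E) ≤ NucAux.nuc Bstar := hopt
  have part1 : NucAux.nuc E₁ ≤ NucAux.nuc E₀ := by
    rw [hsum] at hmain
    linarith
  constructor
  · exact part1
  -- Part 2
  · have hfrob : frobNorm E₀ = Real.sqrt (∑ i, NucAux.dd E₀ i) := by
      rw [frobNorm, NucAux.frob_sq]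
    set N : ℕ := (Finset.univ.filter fun i => 0 < NucAux.dd E₀ i).card with hN
    have hchi_sum : ∑ i, (if 0 < NucAux.dd E₀ i then (1:ℝ) else 0) ^ 2 = N := by
      calc ∑ i, (if 0 < NucAux.dd E₀ i then (1:ℝ) else 0) ^ 2
          = ∑ i, (if 0 < NucAux.dd E₀ i then (1:ℝ) else 0) :=
            Finset.sum_congr rfl fun i _ => by split <;> norm_num
        _ = N := by rw [Finset.sum_boole, hN]
    have hmaineq : NucAux.nuc E₀
        = ∑ i, (if 0 < NucAux.dd E₀ i then (1:ℝ) else 0) * Real.sqrt (NucAux.dd E₀ i) := by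
      refine Finset.sum_congr rfl fun i _ => ?_
      by_cases h : 0 < NucAux.dd E₀ i
      · rw [if_pos h, one_mul]
      · rw [if_neg h, zero_mul, NucAux.dd_eq_zero h, Real.sqrt_zero]
    have hcs := NucAux.cs_sqrt (fun i => if 0 < NucAux.dd E₀ i then (1:ℝ) else 0)
      (fun i => Real.sqrt (NucAux.dd E₀ i))
    have hsq : ∑ i, Real.sqrt (NucAux.dd E₀ i) ^ 2 = ∑ i, NucAux.dd E₀ i :=
      Finset.sum_congr rfl fun i _ => Real.sq_sqrt (NucAux.dd_nonneg E₀ i)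
    have hNle : (N : ℝ) ≤ 2 * r := by
      have h1 : N = Fintype.card {i // NucAux.dd E₀ i ≠ 0} := by
        rw [Fintype.card_subtype, hN]
        congr 1
        refine Finset.filter_congr fun i _ => ?_
        constructor
        · exact fun h => ne_of_gt h
        · exact fun h => lt_of_le_of_ne (NucAux.dd_nonneg E₀ i) (Ne.symm h)
      have h2 : (Matrix.diagonal (NucAux.dd E₀)).rank = Fintype.card {i // NucAux.dd E₀ i ≠ 0} :=
        Matrix.rank_diagonal _
      have h3 : (E₀ᴴ * E₀).rank = E₀.rank := by
        rw [NucAux.ct_eq]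
        exact Matrix.rank_transpose_mul_self E₀
      have h5 := hE₀mem
      rw [hQdef, Matrix.mul_sub, Matrix.mul_one, sub_eq_zero] at h5
      have h6 : U * (Uᴴ * E₀) + P * E₀ = E₀ := by
        rw [hPdef, Matrix.sub_mul, Matrix.one_mul, ← Matrix.mul_assoc]
        abel
      have h7 : (P * E₀ * V) * Vᴴ = P * E₀ := by
        rw [Matrix.mul_assoc (P * E₀) V Vᴴ, ← h5]
      have hsplitE : E₀ = U * (Uᴴ * E₀) + (P * E₀ * V) * Vᴴ := by
        rw [h7]
        exact h6.symm
      have h4 : E₀.rank ≤ 2 * r := by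
        calc E₀.rank ≤ (U * (Uᴴ * E₀)).rank + ((P * E₀ * V) * Vᴴ).rank := by
              conv_lhs => rw [hsplitE]
              exact NucAux.matrank_add_le _ _
          _ ≤ r + r := by
              refine add_le_add ?_ ?_
              · refine le_trans (Matrix.rank_mul_le_left _ _) ?_
                refine le_trans (Matrix.rank_le_card_width U) ?_
                simp
              · refine le_trans (Matrix.rank_mul_le_right _ _) ?_
                rw [NucAux.ct_eq, Matrix.rank_transpose]
                refine le_trans (Matrix.rank_le_card_width V) ?_
                simp
          _ = 2 * r := by ring
      have hNnat : N ≤ 2 * r := by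
        have := h1 ▸ h2 ▸ (NucAux.rank_diag_eq E₀) ▸ h3 ▸ h4
        rw [h1, ← h2, NucAux.rank_diag_eq, h3]
        exact h4
      push_cast
      exact_mod_cast hNnat
    have frob_nonneg : 0 ≤ frobNorm E₀ := by rw [hfrob]; exact Real.sqrt_nonneg _
    calc nuclearNorm E₀
        = ∑ i, (if 0 < NucAux.dd E₀ i then (1:ℝ) else 0) * Real.sqrt (NucAux.dd E₀ i) := hmaineq
      _ ≤ Real.sqrt (∑ i, (if 0 < NucAux.dd E₀ i then (1:ℝ) else 0) ^ 2)
            * Real.sqrt (∑ i, Real.sqrt (NucAux.dd E₀ i) ^ 2) := hcs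
      _ = Real.sqrt N * frobNorm E₀ := by rw [hchi_sum, hsq, hfrob]
      _ ≤ Real.sqrt (2 * r) * frobNorm E₀ := by
          exact mul_le_mul_of_nonneg_right (Real.sqrt_le_sqrt hNle) frob_nonneg
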